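/- Let $p \in [1,2]$, $A \in \mathbb{R}^{n \times d}$ with $\ell_p$ Lewis weights $w_i$, and let $k_i = \lceil w_i / (d/n) \rceil$. Form $A'$ by replacing each row $a_i$ with $k_i$ copies of $a_i / k_i^{1/p}$. Then each $\ell_p$ Lewis weight of $A'$ equals $w_i / k_i$ and is bounded by $d/n$. -/

import Mathlib

open Matrix

/-- The `ℓ_p` Lewis weights of `A`, as a predicate: positive weights satisfying the
fixed-point equation `wᵢ = (aᵢᵀ (Aᵀ W^{1-2/p} A)⁻¹ aᵢ)^{p/2}`. -/
def IsLewisWeights (p : ℝ) {m : Type*} [Fintype m] [DecidableEq m] {d : ℕ}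
    (A : Matrix m (Fin d) ℝ) (w : m → ℝ) : Prop :=
  (∀ i, 0 < w i) ∧
  ∀ i, w i =
    (A i ⬝ᵥ ((Aᵀ * Matrix.diagonal (fun t => w t ^ (1 - 2 / p)) * A)⁻¹).mulVec (A i))
      ^ (p / 2)

/- ### Auxiliary lemmas -/

lemma conj_apply {m : Type*} [Fintype m] [DecidableEq m] {d : ℕ}
    (B : Matrix m (Fin d) ℝ) (u : m → ℝ) (s t : Fin d) :
    (Bᵀ * diagonal u * B) s t = ∑ r, u r * (B r s * B r t) := by
  rw [Matrix.mul_apply]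
  simp only [Matrix.mul_diagonal, Matrix.transpose_apply]
  exact Finset.sum_congr rfl fun r _ => by ring

lemma quad_form {m : Type*} [Fintype m] [DecidableEq m] {d : ℕ}
    (B : Matrix m (Fin d) ℝ) (u : m → ℝ) (x : Fin d → ℝ) :
    x ⬝ᵥ (Bᵀ * diagonal u * B).mulVec x = ∑ r, u r * (B.mulVec x r) ^ 2 := by
  rw [← Matrix.mulVec_mulVec, ← Matrix.mulVec_mulVec, Matrix.dotProduct_mulVec,
    Matrix.vecMul_transpose]
  simp only [dotProduct, Matrix.mulVec_diagonal]
  exact Finset.sum_congr rfl fun r _ => by ring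

lemma posDef_conj {m : Type*} [Fintype m] [DecidableEq m] {d : ℕ}
    (B : Matrix m (Fin d) ℝ) (hB : Function.Injective B.mulVec)
    (u : m → ℝ) (hu : ∀ r, 0 < u r) : (Bᵀ * diagonal u * B).PosDef := by
  refine Matrix.posDef_iff_dotProduct_mulVec.mpr ⟨?_, ?_⟩
  · have h := Matrix.isHermitian_conjTranspose_mul_mul B
      (Matrix.isHermitian_diagonal u)
    simpa using h
  · intro x hx
    rw [star_trivial, quad_form]
    have hBx : B.mulVec x ≠ 0 := by
      intro h
      exact hx (hB (h.trans (Matrix.mulVec_zero B).symm))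
    obtain ⟨r, hr⟩ := Function.ne_iff.mp hBx
    refine Finset.sum_pos' (fun r _ => mul_nonneg (hu r).le (sq_nonneg _))
      ⟨r, Finset.mem_univ r, ?_⟩
    exact mul_pos (hu r) (sq_pos_of_ne_zero (by simpa using hr))

lemma dot_sym {d : ℕ} {M : Matrix (Fin d) (Fin d) ℝ} (hM : Mᵀ = M)
    (a b : Fin d → ℝ) : a ⬝ᵥ M.mulVec b = b ⬝ᵥ M.mulVec a := by
  rw [Matrix.dotProduct_mulVec]
  have hv : vecMul a M = M.mulVec a := by
    conv_lhs => rw [← hM]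
    exact Matrix.vecMul_transpose _ _
  rw [hv, dotProduct_comm]

lemma inv_quad_le {d : ℕ} {M N : Matrix (Fin d) (Fin d) ℝ}
    (hM : M.PosDef) (hN : N.PosDef) {c : ℝ} (hc : 0 < c)
    (h : ∀ z, c * (z ⬝ᵥ M.mulVec z) ≤ z ⬝ᵥ N.mulVec z) (x : Fin d → ℝ) :
    x ⬝ᵥ N⁻¹.mulVec x ≤ c⁻¹ * (x ⬝ᵥ M⁻¹.mulVec x) := by
  have hMt : Mᵀ = M := (by simpa using hM.1 : M.IsSymm)
  set z := N⁻¹.mulVec x with hz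
  set y := M⁻¹.mulVec x with hy
  have hNz : N.mulVec z = x := by
    rw [hz, Matrix.mulVec_mulVec, Matrix.mul_nonsing_inv _
      ((Matrix.isUnit_iff_isUnit_det _).mp hN.isUnit), Matrix.one_mulVec]
  have hMy : M.mulVec y = x := by
    rw [hy, Matrix.mulVec_mulVec, Matrix.mul_nonsing_inv _
      ((Matrix.isUnit_iff_isUnit_det _).mp hM.isUnit), Matrix.one_mulVec]
  have hpsd : 0 ≤ (z - c⁻¹ • y) ⬝ᵥ M.mulVec (z - c⁻¹ • y) := by
    simpa using hM.posSemidef.dotProduct_mulVec_nonneg (z - c⁻¹ • y)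
  have h1 : z ⬝ᵥ M.mulVec y = x ⬝ᵥ z := by rw [hMy]; exact dotProduct_comm z x
  have h2 : y ⬝ᵥ M.mulVec z = x ⬝ᵥ z := by rw [dot_sym hMt]; exact h1
  have h3 : y ⬝ᵥ M.mulVec y = x ⬝ᵥ y := by rw [hMy]; exact dotProduct_comm y x
  have hexp : (z - c⁻¹ • y) ⬝ᵥ M.mulVec (z - c⁻¹ • y)
      = z ⬝ᵥ M.mulVec z - 2 * c⁻¹ * (x ⬝ᵥ z) + c⁻¹ * c⁻¹ * (x ⬝ᵥ y) := by
    simp only [Matrix.mulVec_sub, Matrix.mulVec_smul, sub_dotProduct, smul_dotProduct,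
      dotProduct_sub, dotProduct_smul, smul_eq_mul]
    rw [h1, h2, h3]
    ring
  have hzN : z ⬝ᵥ N.mulVec z = x ⬝ᵥ z := by rw [hNz, dotProduct_comm]
  have hkey := h z
  rw [hzN] at hkey
  rw [hexp] at hpsd
  have hxz : x ⬝ᵥ N⁻¹.mulVec x = x ⬝ᵥ z := rfl
  rw [hxz]
  have h5 := mul_nonneg hc.le hpsd
  have h6 : c * (z ⬝ᵥ M.mulVec z - 2 * c⁻¹ * (x ⬝ᵥ z) + c⁻¹ * c⁻¹ * (x ⬝ᵥ y))
      = c * (z ⬝ᵥ M.mulVec z) - 2 * (x ⬝ᵥ z) + c⁻¹ * (x ⬝ᵥ y) := by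
    field_simp
  rw [h6] at h5
  linarith [h5, hkey]

lemma lewis_le {m : Type*} [Fintype m] [DecidableEq m] [Nonempty m] {d : ℕ}
    {B : Matrix m (Fin d) ℝ} (hB : Function.Injective B.mulVec)
    {p : ℝ} (hp1 : 1 ≤ p) (hp2 : p ≤ 2) {w v : m → ℝ}
    (hw : IsLewisWeights p B w) (hv : IsLewisWeights p B v) : ∀ i, w i ≤ v i := by
  have hp0 : (0:ℝ) < p := lt_of_lt_of_le one_pos hp1
  set q : ℝ := 1 - 2 / p with hqdef
  have hpne : p ≠ 0 := hp0.ne'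
  have hq0 : q ≤ 0 := by
    have h2p : (1:ℝ) ≤ 2 / p := (le_div_iff₀ hp0).mpr (by linarith)
    rw [hqdef]
    linarith
  obtain ⟨i0, -, hmax⟩ := Finset.exists_max_image Finset.univ (fun i => w i / v i)
    ⟨Classical.arbitrary m, Finset.mem_univ _⟩
  set t : ℝ := w i0 / v i0 with htdef
  have ht : 0 < t := div_pos (hw.1 i0) (hv.1 i0)
  have hle : ∀ r, w r ≤ t * v r := fun r =>
    (div_le_iff₀ (hv.1 r)).mp (hmax r (Finset.mem_univ r))
  set c : ℝ := t ^ q with hcdef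
  have hc : 0 < c := Real.rpow_pos_of_pos ht q
  set M : Matrix (Fin d) (Fin d) ℝ := Bᵀ * diagonal (fun r => v r ^ q) * B with hMdef
  set N : Matrix (Fin d) (Fin d) ℝ := Bᵀ * diagonal (fun r => w r ^ q) * B with hNdef
  have hM : M.PosDef := posDef_conj B hB _ fun r => Real.rpow_pos_of_pos (hv.1 r) q
  have hN : N.PosDef := posDef_conj B hB _ fun r => Real.rpow_pos_of_pos (hw.1 r) q
  have hcomp : ∀ z, c * (z ⬝ᵥ M.mulVec z) ≤ z ⬝ᵥ N.mulVec z := by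
    intro z
    rw [hMdef, hNdef, quad_form, quad_form, Finset.mul_sum]
    refine Finset.sum_le_sum fun r _ => ?_
    rw [← mul_assoc]
    refine mul_le_mul_of_nonneg_right ?_ (sq_nonneg _)
    calc c * v r ^ q = (t * v r) ^ q := by
          rw [Real.mul_rpow ht.le (hv.1 r).le]
      _ ≤ w r ^ q := Real.rpow_le_rpow_of_nonpos (hw.1 r) (hle r) hq0
  have hkey := inv_quad_le hM hN hc hcomp (B i0)
  have hbN : 0 ≤ B i0 ⬝ᵥ N⁻¹.mulVec (B i0) := by
    simpa using hN.inv.posSemidef.dotProduct_mulVec_nonneg (B i0)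
  have hbM : 0 ≤ B i0 ⬝ᵥ M⁻¹.mulVec (B i0) := by
    simpa using hM.inv.posSemidef.dotProduct_mulVec_nonneg (B i0)
  have hwv : w i0 ≤ c⁻¹ ^ (p/2) * v i0 := by
    calc w i0 = (B i0 ⬝ᵥ N⁻¹.mulVec (B i0)) ^ (p/2) := hw.2 i0
      _ ≤ (c⁻¹ * (B i0 ⬝ᵥ M⁻¹.mulVec (B i0))) ^ (p/2) :=
          Real.rpow_le_rpow hbN hkey (by positivity)
      _ = c⁻¹ ^ (p/2) * (B i0 ⬝ᵥ M⁻¹.mulVec (B i0)) ^ (p/2) :=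
          Real.mul_rpow (inv_nonneg.mpr hc.le) hbM
      _ = c⁻¹ ^ (p/2) * v i0 := by rw [← hv.2 i0]
  have hcpow : c⁻¹ ^ (p/2) = t ^ (1 - p/2 : ℝ) := by
    rw [hcdef, ← Real.rpow_neg ht.le, ← Real.rpow_mul ht.le]
    congr 1
    rw [hqdef]
    field_simp
    ring
  have hwt : w i0 = t * v i0 := by
    rw [htdef, div_mul_cancel₀ _ (hv.1 i0).ne']
  have ht1 : t ≤ 1 := by
    by_contra hcon
    push_neg at hcon
    have h1 : t * v i0 ≤ t ^ (1 - p/2 : ℝ) * v i0 := by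
      rw [← hwt]; rw [hcpow] at hwv; exact hwv
    have h2 : t ≤ t ^ (1 - p/2 : ℝ) := le_of_mul_le_mul_right h1 (hv.1 i0)
    have h3 : t ^ (1 - p/2 : ℝ) < t ^ (1:ℝ) := by
      apply Real.rpow_lt_rpow_of_exponent_lt hcon
      linarith
    rw [Real.rpow_one] at h3
    linarith
  intro i
  have h4 := hmax i (Finset.mem_univ i)
  have h5 : w i / v i ≤ 1 := le_trans h4 ht1
  exact (div_le_one (hv.1 i)).mp h5

lemma lewis_unique {m : Type*} [Fintype m] [DecidableEq m] [Nonempty m] {d : ℕ}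
    {B : Matrix m (Fin d) ℝ} (hB : Function.Injective B.mulVec)
    {p : ℝ} (hp1 : 1 ≤ p) (hp2 : p ≤ 2) {w v : m → ℝ}
    (hw : IsLewisWeights p B w) (hv : IsLewisWeights p B v) : w = v :=
  funext fun i => le_antisymm (lewis_le hB hp1 hp2 hw hv i) (lewis_le hB hp1 hp2 hv hw i)

lemma inj_of_rank {n d : ℕ} (A : Matrix (Fin n) (Fin d) ℝ) (hA : A.rank = d) :
    Function.Injective A.mulVec := by
  have hker : LinearMap.ker A.mulVecLin = ⊥ := by
    have h2 := LinearMap.finrank_range_add_finrank_ker A.mulVecLin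
    rw [Module.finrank_fin_fun] at h2
    have h1 : Module.finrank ℝ (LinearMap.range A.mulVecLin) = d := hA
    have h3 : Module.finrank ℝ (LinearMap.ker A.mulVecLin) = 0 := by omega
    exact Submodule.finrank_eq_zero.mp h3
  intro x y hxy
  exact LinearMap.ker_eq_bot.mp hker hxy

/-- Flattening: replacing row `aᵢ` by `kᵢ = ⌈wᵢ/(d/n)⌉` copies of `aᵢ/kᵢ^{1/p}` gives a
matrix whose Lewis weights equal `wᵢ/kᵢ` and are all at most `d/n`. -/
theorem stmt_17 {n d : ℕ} (hn : 0 < n) (hd : 0 < d)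
    (p : ℝ) (hp1 : 1 ≤ p) (hp2 : p ≤ 2)
    (A : Matrix (Fin n) (Fin d) ℝ) (hA : A.rank = d)
    (w : Fin n → ℝ) (hw : IsLewisWeights p A w)
    (k : Fin n → ℕ) (hk : ∀ i, k i = ⌈w i / ((d : ℝ) / n)⌉₊)
    (A' : Matrix ((i : Fin n) × Fin (k i)) (Fin d) ℝ)
    (hA' : ∀ (i : Fin n) (j : Fin (k i)) (l : Fin d),
      A' ⟨i, j⟩ l = A i l / (k i : ℝ) ^ ((1 : ℝ) / p))
    (w' : (i : Fin n) × Fin (k i) → ℝ) (hw' : IsLewisWeights p A' w') :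
    ∀ (i : Fin n) (j : Fin (k i)),
      w' ⟨i, j⟩ = w i / k i ∧ w' ⟨i, j⟩ ≤ (d : ℝ) / n := by
  have hp0 : (0:ℝ) < p := lt_of_lt_of_le one_pos hp1
  have hpne : p ≠ 0 := hp0.ne'
  have hdn : (0:ℝ) < (d : ℝ) / n := div_pos (Nat.cast_pos.mpr hd) (Nat.cast_pos.mpr hn)
  have hk1 : ∀ i, 0 < k i := fun i => by
    rw [hk i]
    exact Nat.one_le_ceil_iff.mpr (div_pos (hw.1 i) hdn)
  have hkpos : ∀ i, (0:ℝ) < (k i : ℝ) := fun i => Nat.cast_pos.mpr (hk1 i)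
  haveI : Nonempty ((i : Fin n) × Fin (k i)) := ⟨⟨⟨0, hn⟩, ⟨0, hk1 _⟩⟩⟩
  have hinj : Function.Injective A.mulVec := inj_of_rank A hA
  -- rows of A'
  have hrow : ∀ s : (i : Fin n) × Fin (k i),
      A' s = fun l => A s.1 l / (k s.1 : ℝ) ^ ((1:ℝ)/p) := fun ⟨i, j⟩ => funext (hA' i j)
  have hrpowpos : ∀ i : Fin n, (0:ℝ) < (k i : ℝ) ^ ((1:ℝ)/p) :=
    fun i => Real.rpow_pos_of_pos (hkpos i) _
  have hmulvec : ∀ (x : Fin d → ℝ) (s : (i : Fin n) × Fin (k i)),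
      A'.mulVec x s = A.mulVec x s.1 / (k s.1 : ℝ) ^ ((1:ℝ)/p) := by
    intro x s
    simp only [Matrix.mulVec, dotProduct, hrow s]
    rw [Finset.sum_div]
    exact Finset.sum_congr rfl fun l _ => by ring
  have hinj' : Function.Injective A'.mulVec := by
    intro x y hxy
    apply hinj
    funext i
    have h := congrFun hxy ⟨i, ⟨0, hk1 i⟩⟩
    rw [hmulvec, hmulvec] at h
    rw [div_eq_div_iff (hrpowpos i).ne' (hrpowpos i).ne'] at h
    exact mul_right_cancel₀ (hrpowpos i).ne' h
  -- the crucial matrix identity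
  have hcc : ∀ i : Fin n, (k i : ℝ) ^ ((1:ℝ)/p) * (k i : ℝ) ^ ((1:ℝ)/p)
      = (k i : ℝ) ^ (2/p : ℝ) := by
    intro i
    rw [← Real.rpow_add (hkpos i)]
    congr 1
    ring
  have hmat : A'ᵀ * diagonal (fun s : (i : Fin n) × Fin (k i) =>
        (w s.1 / (k s.1 : ℝ)) ^ (1 - 2 / p)) * A'
      = Aᵀ * diagonal (fun r => w r ^ (1 - 2 / p)) * A := by
    ext s t
    rw [conj_apply, conj_apply, ← Finset.univ_sigma_univ, Finset.sum_sigma]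
    refine Finset.sum_congr rfl fun i _ => ?_
    have hterm : ∀ j : Fin (k i),
        (w i / (k i : ℝ)) ^ (1 - 2 / p) * (A' ⟨i, j⟩ s * A' ⟨i, j⟩ t)
        = w i ^ (1 - 2 / p) * (A i s * A i t) / (k i : ℝ) := by
      intro j
      have hsplit : (k i : ℝ) = (k i : ℝ) ^ (1 - 2/p : ℝ) * (k i : ℝ) ^ (2/p : ℝ) := by
        rw [← Real.rpow_add (hkpos i)]
        norm_num
      rw [hA' i j s, hA' i j t,
        Real.div_rpow (hw.1 i).le (hkpos i).le, div_mul_div_comm, hcc i,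
        div_mul_div_comm, ← hsplit]
    rw [Finset.sum_congr rfl fun j _ => hterm j, Finset.sum_const, Finset.card_univ,
      Fintype.card_fin, nsmul_eq_mul, mul_comm]
    exact div_mul_cancel₀ _ (hkpos i).ne'
  -- the candidate weights for A'
  have hvLW : IsLewisWeights p A' (fun s => w s.1 / (k s.1 : ℝ)) := by
    have hN : (Aᵀ * diagonal (fun r => w r ^ (1 - 2 / p)) * A).PosDef :=
      posDef_conj A hinj _ fun r => Real.rpow_pos_of_pos (hw.1 r) _
    constructor
    · intro s
      exact div_pos (hw.1 s.1) (hkpos s.1)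
    · rintro ⟨i, j⟩
      show w i / (k i : ℝ) = _
      have hb : 0 ≤ A i ⬝ᵥ ((Aᵀ * diagonal (fun r => w r ^ (1 - 2 / p)) * A)⁻¹).mulVec (A i) := by
        simpa using hN.inv.posSemidef.dotProduct_mulVec_nonneg (A i)
      have hsm : A' ⟨i, j⟩ = ((k i : ℝ) ^ ((1:ℝ)/p))⁻¹ • A i := by
        rw [hrow ⟨i, j⟩]
        funext l
        simp [div_eq_inv_mul]
      rw [show (fun t : (i : Fin n) × Fin (k i) =>
          (fun s : (i : Fin n) × Fin (k i) => w s.1 / (k s.1 : ℝ)) t ^ (1 - 2 / p))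
        = (fun s : (i : Fin n) × Fin (k i) => (w s.1 / (k s.1 : ℝ)) ^ (1 - 2 / p)) from rfl]
      rw [hmat, hsm, smul_dotProduct, Matrix.mulVec_smul, dotProduct_smul,
        smul_eq_mul, smul_eq_mul, ← mul_assoc, ← mul_inv, hcc i]
      rw [Real.mul_rpow (by positivity) hb, ← hw.2 i]
      rw [← Real.rpow_neg (hkpos i).le, ← Real.rpow_mul (hkpos i).le]
      rw [show (-(2/p) * (p/2) : ℝ) = -1 by field_simp]
      rw [Real.rpow_neg_one, div_eq_inv_mul]
  -- uniqueness
  have huniq : w' = fun s => w s.1 / (k s.1 : ℝ) :=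
    lewis_unique hinj' hp1 hp2 hw' hvLW
  intro i j
  constructor
  · exact congrFun huniq ⟨i, j⟩
  · rw [congrFun huniq ⟨i, j⟩]
    have hceil : w i / ((d:ℝ)/n) ≤ (k i : ℝ) := by
      rw [hk i]
      exact Nat.le_ceil _
    rw [div_le_iff₀ (hkpos i)]
    have := (div_le_iff₀ hdn).mp hceil
    linarith [this, mul_comm ((d:ℝ)/n) ((k i : ℝ))]
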